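/- arXiv:1801.05966 — 2 statements merged into one kernel-verified Lean document; each statement's English description precedes it below -/
import Mathlib

section
/- Let φ, ξ be distance distributions and let ⊗_∧ denote convolution with respect to the minimum t-norm, (φ ⊗_∧ ψ)(t) = sup_{r+s=t} min(φ(r), ψ(s)). Then there exists a distance distribution ψ with φ ⊗_∧ ψ = ξ if and only if there exists a distance distribution ψ with ξ♭ = φ♭ + ψ♭ (pointwise on [0,1]). -/
open unitInterval
open scoped ENNReal

noncomputable section

instance : Fact ((0:ℝ) ≤ 1) := ⟨zero_le_one⟩

/-- A distance distribution: a map `φ : [0,∞] → [0,1]` with `φ t = ⨆ s < t, φ s`. -/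
def DistDistr (φ : ℝ≥0∞ → I) : Prop :=
  ∀ t, φ t = ⨆ (s : ℝ≥0∞) (_ : s < t), φ s

/-- The one-step function `κ_{p,a}`. -/
def kappa (p : ℝ≥0∞) (a : I) : ℝ≥0∞ → I :=
  fun t => if t ≤ p then 0 else a

/-- A continuous t-norm on `[0,1]`. -/
structure ContinuousTNorm where
  mul : I → I → I
  continuous' : Continuous fun p : I × I => mul p.1 p.2
  comm : ∀ a b, mul a b = mul b a
  assoc : ∀ a b c, mul (mul a b) c = mul a (mul b c)
  mono : ∀ a, Monotone (mul a)
  mul_one : ∀ a, mul a 1 = a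

/-- The residual `a →* b` of a continuous t-norm. -/
def ContinuousTNorm.residual (T : ContinuousTNorm) (a b : I) : I :=
  sSup {c | T.mul a c ≤ b}

/-- Convolution of maps `[0,∞] → [0,1]` w.r.t. a continuous t-norm. -/
def conv (T : ContinuousTNorm) (φ ψ : ℝ≥0∞ → I) : ℝ≥0∞ → I :=
  fun t => ⨆ (r : ℝ≥0∞) (s : ℝ≥0∞) (_ : r + s = t), T.mul (φ r) (ψ s)

/-- `φ⁻ t = ⨆ s < t, φ s`. -/
def lower (φ : ℝ≥0∞ → I) : ℝ≥0∞ → I :=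
  fun t => ⨆ (s : ℝ≥0∞) (_ : s < t), φ s

/-- Convolution w.r.t. the minimum t-norm. -/
def convMin (φ ψ : ℝ≥0∞ → I) : ℝ≥0∞ → I :=
  fun t => ⨆ (r : ℝ≥0∞) (s : ℝ≥0∞) (_ : r + s = t), φ r ⊓ ψ s

/-- The right adjoint `φ♭` of a distance distribution `φ`. -/
def flat (φ : ℝ≥0∞ → I) : I → ℝ≥0∞ :=
  fun a => sSup {p : ℝ≥0∞ | φ p ≤ a}

lemma DistDistr.mono' {φ : ℝ≥0∞ → I} (h : DistDistr φ) : Monotone φ := by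
  intro s t hst
  rcases eq_or_lt_of_le hst with rfl | h'
  · exact le_rfl
  · rw [h t]
    exact le_iSup₂ (f := fun (s : ℝ≥0∞) (_ : s < t) => φ s) s h'

lemma DistDistr.le_flat_iff {φ : ℝ≥0∞ → I} (h : DistDistr φ) {p : ℝ≥0∞} {a : I} :
    φ p ≤ a ↔ p ≤ flat φ a := by
  constructor
  · intro hp; exact le_sSup hp
  · intro hp
    rw [h p]
    refine iSup₂_le fun s hs => ?_
    obtain ⟨q, hq, hsq⟩ := lt_sSup_iff.mp (hs.trans_le hp)
    exact (h.mono' hsq.le).trans hq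

lemma DistDistr.flat_lt_iff {φ : ℝ≥0∞ → I} (h : DistDistr φ) {p : ℝ≥0∞} {a : I} :
    a < φ p ↔ flat φ a < p := by
  rw [← not_le, ← not_le, h.le_flat_iff]

lemma convMin_le_iff {φ ψ : ℝ≥0∞ → I} {t : ℝ≥0∞} {a : I} :
    convMin φ ψ t ≤ a ↔ ∀ r s : ℝ≥0∞, r + s = t → φ r ⊓ ψ s ≤ a := by
  simp [convMin, iSup_le_iff]

lemma flat_convMin {φ ψ : ℝ≥0∞ → I} (hφ : DistDistr φ) (hψ : DistDistr ψ) (a : I) :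
    flat (convMin φ ψ) a = flat φ a + flat ψ a := by
  apply le_antisymm
  · refine sSup_le fun t ht => ?_
    by_contra hc
    push_neg at hc
    have hQ : flat ψ a ≠ ∞ := fun hQ => by simp [hQ] at hc
    obtain ⟨r, hPr, hrt⟩ := exists_between ((lt_tsub_iff_right (c := flat ψ a)).mpr hc)
    have hrne : r ≠ ∞ := by
      intro h
      rw [h] at hrt
      exact absurd hrt (not_lt.mpr le_top)
    have hrst : r + (t - r) = t := add_tsub_cancel_of_le (hrt.le.trans tsub_le_self)
    have hQs : flat ψ a < t - r :=
      lt_tsub_iff_left.mpr (lt_tsub_iff_right.mp hrt)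
    have h1 : a < φ r := hφ.flat_lt_iff.mpr hPr
    have h2 : a < ψ (t - r) := hψ.flat_lt_iff.mpr hQs
    have := convMin_le_iff.mp ht r (t - r) hrst
    exact absurd this (not_le.mpr (lt_inf_iff.mpr ⟨h1, h2⟩))
  · refine le_sSup (convMin_le_iff.mpr fun r s hrs => ?_)
    rcases le_or_gt r (flat φ a) with hr | hr
    · exact inf_le_left.trans (hφ.le_flat_iff.mpr hr)
    · have hs : s ≤ flat ψ a := by
        by_contra hs
        push_neg at hs
        exact absurd hrs (ENNReal.add_lt_add hr hs).ne'
      exact inf_le_right.trans (hψ.le_flat_iff.mpr hs)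

lemma distDistr_convMin {φ ψ : ℝ≥0∞ → I} (hφ : DistDistr φ) (hψ : DistDistr ψ) :
    DistDistr (convMin φ ψ) := by
  intro t
  apply le_antisymm
  · refine iSup_le fun r => iSup_le fun s => iSup_le fun hrs => ?_
    refine le_of_forall_lt fun c hc => ?_
    have hcφ : c < φ r := hc.trans_le inf_le_left
    have hcψ : c < ψ s := hc.trans_le inf_le_right
    rw [hφ r] at hcφ
    rw [hψ s] at hcψ
    simp only [lt_iSup_iff] at hcφ hcψ
    obtain ⟨r', hr', hcr⟩ := hcφ
    obtain ⟨s', hs', hcs⟩ := hcψ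
    have hlt : r' + s' < t := hrs ▸ ENNReal.add_lt_add hr' hs'
    have hterm : φ r' ⊓ ψ s' ≤ convMin φ ψ (r' + s') := by
      refine le_trans (le_iSup (fun _ : r' + s' = r' + s' => φ r' ⊓ ψ s') rfl) ?_
      exact le_iSup₂ (f := fun (r s : ℝ≥0∞) => ⨆ (_ : r + s = r' + s'), φ r ⊓ ψ s) r' s'
    refine lt_of_lt_of_le (lt_inf_iff.mpr ⟨hcr, hcs⟩) ?_
    exact le_trans hterm
      (le_iSup₂ (f := fun (u : ℝ≥0∞) (_ : u < t) => convMin φ ψ u) (r' + s') hlt)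
  · refine iSup₂_le fun u hu => ?_
    refine iSup_le fun r => iSup_le fun s => iSup_le fun hrs => ?_
    have ht : r + (s + (t - u)) = t := by
      rw [← add_assoc, hrs, add_tsub_cancel_of_le hu.le]
    refine le_trans (inf_le_inf_left _ (hψ.mono' (le_self_add (a := s) (b := t - u)))) ?_
    exact le_iSup_of_le r (le_iSup_of_le (s + (t - u)) (le_iSup_of_le ht le_rfl))

lemma flat_inj {φ ξ : ℝ≥0∞ → I} (hφ : DistDistr φ) (hξ : DistDistr ξ)
    (h : ∀ a, flat φ a = flat ξ a) : φ = ξ := by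
  funext t
  apply le_antisymm
  · exact hφ.le_flat_iff.mpr ((h (ξ t)) ▸ hξ.le_flat_iff.mp le_rfl)
  · exact hξ.le_flat_iff.mpr ((h (φ t)) ▸ hφ.le_flat_iff.mp le_rfl)

/-- `ξ` is a diagonal on `φ` in `Δ_∧` iff `ξ♭ = φ♭ + ψ♭` for some
distance distribution `ψ`. -/
theorem stmt_16 (φ ξ : ℝ≥0∞ → I) (hφ : DistDistr φ) (hξ : DistDistr ξ) :
    (∃ ψ : ℝ≥0∞ → I, DistDistr ψ ∧ convMin φ ψ = ξ) ↔
      ∃ ψ : ℝ≥0∞ → I, DistDistr ψ ∧ ∀ a : I, flat ξ a = flat φ a + flat ψ a := by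
  constructor
  · rintro ⟨ψ, hψ, rfl⟩
    exact ⟨ψ, hψ, fun a => flat_convMin hφ hψ a⟩
  · rintro ⟨ψ, hψ, hfl⟩
    refine ⟨ψ, hψ, flat_inj (distDistr_convMin hφ hψ) hξ fun a => ?_⟩
    rw [flat_convMin hφ hψ a, hfl a]
end
end

section
/- Let * be a continuous t-norm and let φ be a distance distribution. Then every distance distribution ξ with ξ ≤ φ pointwise is divisible by φ (i.e., there exists a distance distribution ψ with φ ⊗ ψ = ξ) if and only if φ is a one-step function, i.e., φ = κ_{p,a} for some p ∈ [0,∞) and a ∈ [0,1]. -/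
open unitInterval
open scoped ENNReal

noncomputable section

lemma I_bot_eq : (⊥ : I) = 0 := le_antisymm bot_le nonneg'

namespace ContinuousTNorm

variable (T : ContinuousTNorm)

lemma one_mul' (a : I) : T.mul 1 a = a := by rw [T.comm]; exact T.mul_one a

lemma mul_le_left (a b : I) : T.mul a b ≤ a := by
  calc T.mul a b ≤ T.mul a 1 := T.mono a le_one'
  _ = a := T.mul_one a

lemma mul_le_right (a b : I) : T.mul a b ≤ b := by rw [T.comm]; exact T.mul_le_left b a

lemma mono_left {a b : I} (c : I) (h : a ≤ b) : T.mul a c ≤ T.mul b c := by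
  rw [T.comm a c, T.comm b c]; exact T.mono c h

lemma mul_mono {a b c d : I} (h1 : a ≤ c) (h2 : b ≤ d) : T.mul a b ≤ T.mul c d :=
  le_trans (T.mono_left b h1) (T.mono c h2)

lemma mul_zero' (a : I) : T.mul a 0 = 0 :=
  le_antisymm (T.mul_le_right a 0) nonneg'

lemma zero_mul' (a : I) : T.mul 0 a = 0 := by rw [T.comm]; exact T.mul_zero' a

lemma continuous_mul (a : I) : Continuous (T.mul a) := by
  have : Continuous fun x : I => ((a, x) : I × I) := by continuity
  exact T.continuous'.comp this

lemma mul_iSup {ι : Sort*} (a : I) (g : ι → I) :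
    T.mul a (⨆ i, g i) = ⨆ i, T.mul a (g i) := by
  refine Monotone.map_iSup_of_continuousAt ((T.continuous_mul a).continuousAt) (T.mono a) ?_
  rw [I_bot_eq, T.mul_zero']

lemma exists_mul_eq {a b : I} (h : b ≤ a) : ∃ c, T.mul a c = b := by
  have h0 : b ∈ Set.Icc (T.mul a 0) (T.mul a 1) := by
    rw [T.mul_zero', T.mul_one]; exact ⟨nonneg', h⟩
  exact intermediate_value_univ 0 1 (T.continuous_mul a) h0

lemma residual_spec {a b : I} (h : b ≤ a) : T.mul a (T.residual a b) = b := by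
  obtain ⟨c, hc⟩ := T.exists_mul_eq h
  have hne : {x : I | T.mul a x ≤ b}.Nonempty := ⟨c, le_of_eq hc⟩
  have hcl : IsClosed {x : I | T.mul a x ≤ b} :=
    isClosed_Iic.preimage (T.continuous_mul a)
  have hmem : T.residual a b ∈ {x : I | T.mul a x ≤ b} :=
    (hcl.isCompact).sSup_mem hne
  refine le_antisymm hmem ?_
  have : c ≤ T.residual a b := le_sSup (le_of_eq hc)
  calc b = T.mul a c := hc.symm
  _ ≤ T.mul a (T.residual a b) := T.mono a this

lemma residual_mono (a : I) {b b' : I} (h : b ≤ b') : T.residual a b ≤ T.residual a b' :=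
  sSup_le_sSup (fun c hc => le_trans hc h)

lemma idem_min {z y : I} (hz : T.mul z z = z) (h : y ≤ z) : T.mul z y = y := by
  obtain ⟨w, hw⟩ := T.exists_mul_eq h
  calc T.mul z y = T.mul z (T.mul z w) := by rw [hw]
  _ = T.mul (T.mul z z) w := (T.assoc z z w).symm
  _ = y := by rw [hz, hw]

end ContinuousTNorm

namespace Stmt17
open ContinuousTNorm

lemma lt_iSup' {ι : Sort*} {f : ι → I} {a : I} (h : a < ⨆ i, f i) : ∃ i, a < f i := by
  by_contra hc
  push_neg at hc
  exact absurd (iSup_le hc) (not_le.mpr h)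

lemma dd_mono {φ : ℝ≥0∞ → I} (h : DistDistr φ) : Monotone φ := by
  intro s t hst
  rw [h s, h t]
  exact iSup_le fun u => iSup_le fun hu => le_iSup_of_le u (le_iSup_of_le (lt_of_lt_of_le hu hst) le_rfl)

lemma dd_zero {φ : ℝ≥0∞ → I} (h : DistDistr φ) : φ 0 = 0 := by
  rw [h 0, ← I_bot_eq]
  simp [iSup_eq_bot]

lemma dd_le_of_lt {φ : ℝ≥0∞ → I} (h : DistDistr φ) {s t : ℝ≥0∞} (hst : s < t) :
    φ s ≤ φ t := dd_mono h hst.le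

lemma kappa_dd (p : ℝ≥0∞) (a : I) : DistDistr (kappa p a) := by
  intro t
  refine le_antisymm ?_ (iSup_le fun s => iSup_le fun hs => ?_)
  · by_cases h : t ≤ p
    · rw [show kappa p a t = 0 from if_pos h]
      exact nonneg'
    · push_neg at h
      obtain ⟨m, hm1, hm2⟩ := exists_between h
      have : kappa p a m = a := by simp [kappa, not_le.mpr hm1]
      calc kappa p a t = a := by simp [kappa, not_le.mpr h]
      _ ≤ ⨆ (s) (_ : s < t), kappa p a s := by
          exact le_iSup_of_le m (le_iSup_of_le hm2 (le_of_eq this.symm))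
  · by_cases hsp : s ≤ p
    · simp [kappa, hsp, nonneg']
    · have h : ¬ t ≤ p := fun ht => hsp (le_trans hs.le ht)
      simp [kappa, hsp, h]

lemma inf_dd {f g : ℝ≥0∞ → I} (hf : DistDistr f) (hg : DistDistr g) :
    DistDistr (fun t => f t ⊓ g t) := by
  intro t
  refine le_antisymm ?_ (iSup_le fun s => iSup_le fun hs => inf_le_inf (dd_le_of_lt hf hs) (dd_le_of_lt hg hs))
  refine le_of_forall_lt fun c hc => ?_
  have hcf : c < f t := lt_of_lt_of_le hc inf_le_left
  have hcg : c < g t := lt_of_lt_of_le hc inf_le_right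
  rw [hf t] at hcf; rw [hg t] at hcg
  obtain ⟨u1, h1⟩ := lt_iSup' hcf
  obtain ⟨hu1, h1⟩ := lt_iSup' h1
  obtain ⟨u2, h2⟩ := lt_iSup' hcg
  obtain ⟨hu2, h2⟩ := lt_iSup' h2
  have hu : max u1 u2 < t := max_lt hu1 hu2
  have : c < f (max u1 u2) ⊓ g (max u1 u2) :=
    lt_inf_iff.mpr ⟨lt_of_lt_of_le h1 (dd_mono hf (le_max_left _ _)),
      lt_of_lt_of_le h2 (dd_mono hg (le_max_right _ _))⟩
  exact lt_of_lt_of_le this (le_iSup_of_le (max u1 u2) (le_iSup_of_le hu le_rfl))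

lemma lower_dd (f : ℝ≥0∞ → I) : DistDistr (lower f) := by
  intro t
  refine le_antisymm (iSup_le fun s => iSup_le fun hs => ?_) ?_
  · obtain ⟨m, hm1, hm2⟩ := exists_between hs
    refine le_iSup_of_le m (le_iSup_of_le hm2 ?_)
    exact le_iSup_of_le s (le_iSup_of_le hm1 le_rfl)
  · refine iSup_le fun s => iSup_le fun hs => iSup_le fun u => iSup_le fun hu => ?_
    exact le_iSup_of_le u (le_iSup_of_le (lt_trans hu hs) le_rfl)

variable {T : ContinuousTNorm}

lemma conv_term_le {φ ψ : ℝ≥0∞ → I} {r s t : ℝ≥0∞} (hrs : r + s = t) :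
    T.mul (φ r) (ψ s) ≤ conv T φ ψ t :=
  le_iSup_of_le r (le_iSup_of_le s (le_iSup_of_le hrs le_rfl))

lemma conv_le {φ ψ : ℝ≥0∞ → I} {t : ℝ≥0∞} {x : I}
    (h : ∀ r s, r + s = t → T.mul (φ r) (ψ s) ≤ x) : conv T φ ψ t ≤ x :=
  iSup_le fun r => iSup_le fun s => iSup_le fun hrs => h r s hrs

lemma lt_conv {φ ψ : ℝ≥0∞ → I} {t : ℝ≥0∞} {x : I} (h : x < conv T φ ψ t) :
    ∃ r s, r + s = t ∧ x < T.mul (φ r) (ψ s) := by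
  obtain ⟨r, h⟩ := lt_iSup' h
  obtain ⟨s, h⟩ := lt_iSup' h
  obtain ⟨hrs, h⟩ := lt_iSup' h
  exact ⟨r, s, hrs, h⟩

end Stmt17

namespace Stmt17
open ContinuousTNorm

lemma kappa_le (p : ℝ≥0∞) (a : I) (w : ℝ≥0∞) : kappa p a w ≤ a := by
  by_cases h : w ≤ p
  · rw [show kappa p a w = 0 from if_pos h]; exact nonneg'
  · exact le_of_eq (if_neg h)

lemma divisible_of_kappa (T : ContinuousTNorm) (p : ℝ≥0∞) (hp : p ≠ ∞) (a : I)
    (ξ : ℝ≥0∞ → I) (hξ : DistDistr ξ) (hle : ∀ t, ξ t ≤ kappa p a t) :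
    ∃ ψ : ℝ≥0∞ → I, DistDistr ψ ∧ conv T (kappa p a) ψ = ξ := by
  set g : ℝ≥0∞ → I := fun u => T.residual a (ξ (u + p)) with hg
  refine ⟨lower g, lower_dd g, funext fun t => ?_⟩
  have hξa : ∀ w, ξ w ≤ a := fun w => (hle w).trans (kappa_le p a w)
  have hkey : ∀ u, T.mul a (g u) = ξ (u + p) := fun u => T.residual_spec (hξa (u + p))
  refine le_antisymm (conv_le fun r s hrs => ?_) ?_
  · by_cases hr : r ≤ p
    · rw [show kappa p a r = 0 from if_pos hr, T.zero_mul']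
      exact nonneg'
    · push_neg at hr
      rw [show kappa p a r = a from if_neg (not_le.mpr hr)]
      show T.mul a (⨆ (s' : ℝ≥0∞) (_ : s' < s), g s') ≤ ξ t
      rw [T.mul_iSup]
      refine iSup_le fun s' => ?_
      rw [T.mul_iSup]
      refine iSup_le fun hs' => ?_
      rw [hkey s']
      have hlt : s' + p < t := by
        rw [← hrs, add_comm r s]
        exact ENNReal.add_lt_add hs' hr
      exact dd_mono hξ hlt.le
  · rw [hξ t]
    refine iSup_le fun u => iSup_le fun hu => ?_
    rw [hξ u]
    refine iSup_le fun u' => iSup_le fun hu' => ?_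
    by_cases hup : u' ≤ p
    · have : ξ u' = 0 := le_antisymm ((hle u').trans (le_of_eq (if_pos hup))) nonneg'
      rw [this]; exact nonneg'
    · push_neg at hup
      have hpu : p ≤ u := le_of_lt (lt_trans hup hu')
      set s : ℝ≥0∞ := u - p with hs
      set r : ℝ≥0∞ := t - s with hrdef
      have hst : s < t := lt_of_le_of_lt tsub_le_self hu
      have hrs : r + s = t := tsub_add_cancel_of_le hst.le
      have hpr : p < r := by
        rw [hrdef]
        rw [lt_tsub_iff_right]
        rwa [hs, add_tsub_cancel_of_le hpu]
      have hs's : u' - p < s := by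
        rw [hs, lt_tsub_iff_right, tsub_add_cancel_of_le hup.le]
        exact hu'
      refine le_trans ?_ (conv_term_le (T := T) (φ := kappa p a) (ψ := lower g) hrs)
      rw [show kappa p a r = a from if_neg (not_le.mpr hpr)]
      have h1 : ξ u' = T.mul a (g (u' - p)) := by
        rw [hkey (u' - p), tsub_add_cancel_of_le hup.le]
      rw [h1]
      exact T.mono a (le_iSup_of_le (u' - p) (le_iSup_of_le hs's le_rfl))

end Stmt17

namespace Stmt17
open ContinuousTNorm

lemma value_dichotomy (T : ContinuousTNorm) (φ : ℝ≥0∞ → I) (hφ : DistDistr φ)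
    (H : ∀ ξ : ℝ≥0∞ → I, DistDistr ξ → (∀ t, ξ t ≤ φ t) →
        ∃ ψ : ℝ≥0∞ → I, DistDistr ψ ∧ conv T φ ψ = ξ)
    (t0 : ℝ≥0∞) (ht0 : φ t0 ≠ 0) (ht0' : φ t0 ≠ φ ∞) : False := by
  set b := φ t0 with hbdef
  set c' := φ ∞ with hc'def
  have hb0 : (0:I) < b := lt_of_le_of_ne nonneg' (Ne.symm ht0)
  have hbc : b < c' := lt_of_le_of_ne (dd_mono hφ le_top) ht0'
  have ht00 : t0 ≠ 0 := fun h => ht0 (by rw [hbdef, h]; exact dd_zero hφ)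
  -- Test A : ξ = φ ⊓ κ_{0,b}
  obtain ⟨ψA, hψA, hcA⟩ := H (fun t => φ t ⊓ kappa 0 b t)
    (inf_dd hφ (kappa_dd 0 b)) (fun t => inf_le_left)
  set x := ψA ∞ with hxdef
  have hinf : conv T φ ψA ∞ = T.mul c' x := by
    refine le_antisymm (conv_le fun r s _ =>
      T.mul_mono (dd_mono hφ le_top) (dd_mono hψA le_top)) ?_
    exact conv_term_le (by simp)
  have hax : T.mul c' x = b := by
    rw [← hinf]
    have := congrFun hcA ∞
    rw [this]
    show φ ∞ ⊓ kappa 0 b ∞ = b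
    rw [show kappa 0 b ∞ = b from if_neg (by simp)]
    exact inf_eq_right.mpr hbc.le
  have hbx : T.mul b x = b := by
    refine le_antisymm (T.mul_le_left b x) ?_
    have h1 : conv T φ ψA t0 = b := by
      rw [congrFun hcA t0]
      show φ t0 ⊓ kappa 0 b t0 = b
      rw [show kappa 0 b t0 = b from if_neg (by simp [ht00])]
      exact inf_eq_right.mpr le_rfl
    calc b = conv T φ ψA t0 := h1.symm
    _ ≤ T.mul b x := conv_le fun r s hrs =>
        T.mul_mono (dd_mono hφ (by rw [← hrs]; exact le_self_add)) (dd_mono hψA le_top)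
  -- powers of x
  set f : ℕ → I := fun n => Nat.rec (1:I) (fun _ y => T.mul x y) n with hfdef
  have hfs : ∀ n, f (n+1) = T.mul x (f n) := fun n => rfl
  have hf1 : f 1 = x := by
    rw [show (1:ℕ) = 0 + 1 from rfl, hfs 0]; exact T.mul_one x
  have hfa : Antitone f := antitone_nat_of_succ_le fun n => by
    rw [hfs n]; exact T.mul_le_right x (f n)
  have hbf : ∀ n, T.mul b (f n) = b := by
    intro n
    induction n with
    | zero => exact T.mul_one b
    | succ n ih => rw [hfs n, ← T.assoc, hbx, ih]
  have hfadd : ∀ m n, T.mul (f m) (f n) = f (m + n) := by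
    intro m
    induction m with
    | zero => intro n; rw [show f 0 = 1 from rfl, T.one_mul', Nat.zero_add]
    | succ m ih =>
        intro n
        rw [hfs m, T.assoc, ih n, show m + 1 + n = (m + n) + 1 from by omega, hfs (m + n)]
  set z := ⨅ n, f n with hzdef
  have hlim : Filter.Tendsto f Filter.atTop (nhds z) := tendsto_atTop_iInf hfa
  have hbz : T.mul b z = b := by
    have h1 : Filter.Tendsto (fun n => T.mul b (f n)) Filter.atTop (nhds (T.mul b z)) :=
      ((T.continuous_mul b).tendsto z).comp hlim
    simp only [hbf] at h1
    exact (tendsto_nhds_unique h1 tendsto_const_nhds).symm ▸ rfl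

  have hzz : T.mul z z = z := by
    have hpair : Filter.Tendsto (fun n => ((f n, f n) : I × I)) Filter.atTop (nhds (z, z)) :=
      hlim.prodMk_nhds hlim
    have h1 : Filter.Tendsto (fun n => T.mul (f n) (f n)) Filter.atTop (nhds (T.mul z z)) :=
      (T.continuous'.tendsto (z, z)).comp hpair
    have h2 : Filter.Tendsto (fun n => f (n + n)) Filter.atTop (nhds z) :=
      hlim.comp (Filter.tendsto_atTop_atTop.mpr fun c => ⟨c, fun a ha => le_trans ha (by omega)⟩)
    have h3 : (fun n => T.mul (f n) (f n)) = fun n => f (n + n) := funext fun n => hfadd n n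
    rw [h3] at h1
    exact tendsto_nhds_unique h1 h2
  have hzx : z ≤ x := le_trans (iInf_le f 1) (le_of_eq hf1)
  have hbz' : b ≤ z := by
    calc b = T.mul b z := hbz.symm
    _ ≤ z := T.mul_le_right b z
  have hc'z : T.mul c' z ≤ b := le_trans (T.mono c' hzx) (le_of_eq hax)
  have hzb : z = b := by
    rcases le_or_gt z c' with h | h
    · have h1 : T.mul z c' = z := by
        refine le_antisymm (T.mul_le_left z c') ?_
        calc z = T.mul z z := hzz.symm
        _ ≤ T.mul z c' := T.mono z h
      refine le_antisymm ?_ hbz'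
      calc z = T.mul z c' := h1.symm
      _ = T.mul c' z := T.comm z c'
      _ ≤ b := hc'z
    · exfalso
      have h1 : T.mul z c' = c' := T.idem_min hzz h.le
      have : c' ≤ b := by
        calc c' = T.mul z c' := h1.symm
        _ = T.mul c' z := T.comm z c'
        _ ≤ b := hc'z
      exact absurd (lt_of_le_of_lt this hbc) (lt_irrefl c')
  have hbb : T.mul b b = b := by rw [← hzb]; exact hzz
  have hexch : ∀ β y : I, β ≤ b → b ≤ y → T.mul y β = β := by
    intro β y hβ hy
    have h1 : T.mul b β = β := T.idem_min hbb hβ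
    have h2 : T.mul y b = b := by
      refine le_antisymm (T.mul_le_right y b) ?_
      calc b = T.mul b b := hbb.symm
      _ ≤ T.mul y b := T.mono_left b hy
    calc T.mul y β = T.mul y (T.mul b β) := by rw [h1]
    _ = T.mul (T.mul y b) β := (T.assoc y b β).symm
    _ = β := by rw [h2, h1]
  -- the thresholds P < Q
  set P := sSup {w : ℝ≥0∞ | φ w = 0} with hPdef
  have hPle : ∀ s, s < P → φ s = 0 := by
    intro s hs
    obtain ⟨w, hw, hsw⟩ := lt_sSup_iff.mp hs
    exact le_antisymm (le_of_le_of_eq (dd_mono hφ hsw.le) hw) nonneg'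
  have hφP : φ P = 0 := by
    rw [hφ P]
    rw [← I_bot_eq]
    refine le_antisymm (iSup_le fun s => iSup_le fun hs => ?_) bot_le
    rw [hPle s hs, ← I_bot_eq]
  set Q := sSup {w : ℝ≥0∞ | φ w ≤ b} with hQdef
  have hφQ : φ Q ≤ b := by
    rw [hφ Q]
    refine iSup_le fun s => iSup_le fun hs => ?_
    obtain ⟨w, hw, hsw⟩ := lt_sSup_iff.mp hs
    exact le_trans (dd_mono hφ hsw.le) hw
  have hQgt : ∀ w, Q < w → b < φ w := by
    intro w hw
    by_contra h
    push_neg at h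
    exact absurd (le_sSup (show w ∈ {w : ℝ≥0∞ | φ w ≤ b} from h)) (not_le.mpr hw)
  have hQtop : Q ≠ ∞ := by
    have : ∃ s1, s1 < ∞ ∧ b < φ s1 := by
      by_contra h
      push_neg at h
      have : c' ≤ b := by
        rw [hc'def, hφ ∞]
        exact iSup_le fun s => iSup_le fun hs => h s hs
      exact absurd (lt_of_le_of_lt this hbc) (lt_irrefl c')
    obtain ⟨s1, hs1top, hs1⟩ := this
    have hQs1 : Q ≤ s1 := by
      refine sSup_le fun w hw => ?_
      by_contra hc
      push_neg at hc
      exact absurd (le_trans (dd_mono hφ hc.le) hw) (not_le.mpr hs1)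
    exact (lt_of_le_of_lt hQs1 hs1top).ne
  have hPt0 : P ≤ t0 := by
    refine sSup_le fun w hw => ?_
    by_contra hc
    push_neg at hc
    exact ht0 (le_antisymm (le_of_le_of_eq (dd_mono hφ hc.le) hw) nonneg')
  have ht0Q : t0 ≤ Q := le_sSup (show φ t0 ≤ b from le_rfl)
  have hPQ : P < Q := by
    refine lt_of_le_of_ne (hPt0.trans ht0Q) fun h => ?_
    have : t0 = P := le_antisymm (le_trans ht0Q h.symm.le) hPt0
    exact ht0 (by rw [hbdef, this, hφP])
  obtain ⟨m, hPm, hmQ⟩ := exists_between hPQ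
  -- Test B : ξ = φ ⊓ κ_{m,1}
  obtain ⟨ψB, hψB, hcB⟩ := H (fun t => φ t ⊓ kappa m 1 t)
    (inf_dd hφ (kappa_dd m 1)) (fun t => inf_le_left)
  have hψBb : ∀ s : ℝ≥0∞, 0 < s → b < ψB s := by
    intro s0 hs0
    set sf := min s0 1 with hsfdef
    have hsf0 : sf ≠ 0 := (lt_min hs0 zero_lt_one).ne'
    have hsftop : sf ≠ ∞ := (lt_of_le_of_lt (min_le_right s0 1) (by norm_num)).ne
    set t := Q + sf with htdef
    have hQt : Q < t := ENNReal.lt_add_right hQtop hsf0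
    have hmt : m < t := lt_trans hmQ hQt
    have hbφt : b < φ t := hQgt t hQt
    have hlt : b < conv T φ ψB t := by
      rw [congrFun hcB t]
      show b < φ t ⊓ kappa m 1 t
      rw [show kappa m 1 t = 1 from if_neg (not_le.mpr hmt)]
      rw [inf_eq_left.mpr le_one']
      exact hbφt
    obtain ⟨r, s, hrs, hterm⟩ := lt_conv hlt
    have hφr : b < φ r := lt_of_lt_of_le hterm (T.mul_le_left _ _)
    have hψs : b < ψB s := lt_of_lt_of_le hterm (T.mul_le_right _ _)
    have hQr : Q < r := by
      by_contra h
      push_neg at h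
      exact absurd (le_trans (dd_mono hφ h) hφQ) (not_le.mpr hφr)
    have hssf : s < sf := by
      by_contra h
      push_neg at h
      have h1 : t < r + s :=
        lt_of_lt_of_le (ENNReal.add_lt_add_right hsftop hQr) (add_le_add_right h r)
      exact absurd hrs (ne_of_gt h1)
    exact lt_of_lt_of_le hψs (dd_mono hψB (le_trans hssf.le (min_le_left s0 1)))
  obtain ⟨r, hPr, hrm⟩ := exists_between hPm
  set s := m - r with hsdef
  have hrs : r + s = m := add_tsub_cancel_of_le hrm.le
  have hs0 : (0:ℝ≥0∞) < s := tsub_pos_iff_lt.mpr hrm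
  have hφrpos : (0:I) < φ r := by
    refine lt_of_le_of_ne nonneg' fun h => ?_
    exact absurd (le_sSup (show r ∈ {w : ℝ≥0∞ | φ w = 0} from h.symm)) (not_le.mpr hPr)
  have hψspos : b < ψB s := hψBb s hs0
  have hposterm : (0:I) < T.mul (φ r) (ψB s) := by
    rcases le_or_gt (φ r) b with h | h
    · rw [T.comm, hexch (φ r) (ψB s) h hψspos.le]
      exact hφrpos
    · calc (0:I) < b := hb0
      _ = T.mul b b := hbb.symm
      _ ≤ T.mul (φ r) (ψB s) := T.mul_mono h.le hψspos.le
  have hconvm : conv T φ ψB m = 0 := by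
    rw [congrFun hcB m]
    show φ m ⊓ kappa m 1 m = 0
    rw [show kappa m 1 m = 0 from if_pos le_rfl]
    exact inf_eq_right.mpr nonneg'
  have hle0 : T.mul (φ r) (ψB s) ≤ 0 := by
    rw [← hconvm]
    exact conv_term_le hrs
  exact absurd (le_antisymm hle0 nonneg') (ne_of_gt hposterm)

end Stmt17


open Stmt17 in
/-- every distance distribution `ξ ≤ φ` is divisible by `φ` iff `φ`
is a one-step function. -/
theorem stmt_17 (T : ContinuousTNorm) (φ : ℝ≥0∞ → I) (hφ : DistDistr φ) :
    (∀ ξ : ℝ≥0∞ → I, DistDistr ξ → (∀ t, ξ t ≤ φ t) →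
        ∃ ψ : ℝ≥0∞ → I, DistDistr ψ ∧ conv T φ ψ = ξ) ↔
      ∃ (p : ℝ≥0∞) (a : I), p ≠ ∞ ∧ φ = kappa p a := by
  constructor
  · intro H
    by_cases hc0 : φ ∞ = 0
    · refine ⟨0, 0, by simp, funext fun t => ?_⟩
      have h0 : φ t = 0 := le_antisymm (le_of_le_of_eq (dd_mono hφ le_top) hc0) nonneg'
      rw [h0]
      unfold kappa
      by_cases h : t ≤ 0 <;> simp [h]
    · set P := sSup {w : ℝ≥0∞ | φ w = 0} with hPdef
      have hPle : ∀ s, s < P → φ s = 0 := by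
        intro s hs
        obtain ⟨w, hw, hsw⟩ := lt_sSup_iff.mp hs
        exact le_antisymm (le_of_le_of_eq (dd_mono hφ hsw.le) hw) nonneg'
      have hφP : φ P = 0 := by
        rw [hφ P, ← I_bot_eq]
        refine le_antisymm (iSup_le fun s => iSup_le fun hs => ?_) bot_le
        rw [hPle s hs, ← I_bot_eq]
      have hV : ∀ t, φ t = 0 ∨ φ t = φ ∞ := by
        intro t
        by_contra h
        push_neg at h
        exact value_dichotomy T φ hφ H t h.1 h.2
      have hPtop : P ≠ ∞ := by
        have : ∃ s0, s0 < ∞ ∧ φ s0 ≠ 0 := by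
          by_contra h
          push_neg at h
          refine hc0 ?_
          rw [hφ ∞, ← I_bot_eq]
          refine le_antisymm (iSup_le fun s => iSup_le fun hs => ?_) bot_le
          rw [h s hs, ← I_bot_eq]
        obtain ⟨s0, hs0top, hs0⟩ := this
        have hPs0 : P ≤ s0 := by
          refine sSup_le fun w hw => ?_
          by_contra hc
          push_neg at hc
          exact hs0 (le_antisymm (le_of_le_of_eq (dd_mono hφ hc.le) hw) nonneg')
        exact (lt_of_le_of_lt hPs0 hs0top).ne
      refine ⟨P, φ ∞, hPtop, funext fun t => ?_⟩
      by_cases ht : t ≤ P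
      · rw [show kappa P (φ ∞) t = 0 from if_pos ht]
        exact le_antisymm (le_of_le_of_eq (dd_mono hφ ht) hφP) nonneg'
      · rw [show kappa P (φ ∞) t = φ ∞ from if_neg ht]
        rcases hV t with h | h
        · exact absurd (le_sSup (show t ∈ {w : ℝ≥0∞ | φ w = 0} from h)) ht
        · exact h
  · rintro ⟨p, a, hp, rfl⟩
    exact fun ξ hξ hle => divisible_of_kappa T p hp a ξ hξ hle
end
end
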